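/- Functorial model equals permanent model: for any m×m complex matrix U and occupation states I, J ∈ Φ_{m,n}, ⟨J| α U^{⊗n} α† |I⟩ = Perm(U_{I,J}) / √(N_I · N_J), where N_S = ∏_j S_j! and U_{I,J} is the n×n matrix obtained by repeating the i-th row I_i times and the j-th column J_j times. -/
import Mathlib


/-- `occVec X j` counts the occurrences of mode `j` in the list `X`. -/
def occVec {n m : ℕ} (X : Fin n → Fin m) : Fin m → ℕ :=
  fun j => (Finset.univ.filter fun i => X i = j).card

/-- The amplitude of the state `α†|I⟩` on the basis list `X`:
`α†|I⟩ = √(N_I/n!)·Σ_{X ∈ a⁻¹(I)} |X⟩` with `N_I = ∏_j I_j!`. -/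
noncomputable def adag {n m : ℕ} (I : Fin m → ℕ) (X : Fin n → Fin m) : ℝ :=
  if occVec X = I then Real.sqrt ((∏ j, (I j).factorial : ℝ) / n.factorial) else 0

/-- The permanent of a square matrix. -/
noncomputable def perm {n : ℕ} (A : Matrix (Fin n) (Fin n) ℂ) : ℂ :=
  ∑ σ : Equiv.Perm (Fin n), ∏ i, A i (σ i)

namespace BosonAux

variable {n m : ℕ}

lemma occVec_comp_perm (X : Fin n → Fin m) (σ : Equiv.Perm (Fin n)) :
    occVec (X ∘ σ) = occVec X := by
  funext j
  show (Finset.univ.filter fun i => X (σ i) = j).card = _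
  rw [← Fintype.card_subtype, occVec, ← Fintype.card_subtype]
  exact Fintype.card_congr (σ.subtypeEquiv fun a => Iff.rfl)

def fiberEquiv (X X' : Fin n → Fin m) :
    {σ : Equiv.Perm (Fin n) // X' ∘ σ = X} ≃ ∀ j, ({i // X i = j} ≃ {i // X' i = j}) where
  toFun := fun ⟨σ, h⟩ j => σ.subtypeEquiv fun i => by
    rw [show X' (σ i) = X i from congrFun h i]
  invFun := fun e =>
    ⟨(Equiv.sigmaFiberEquiv X).symm.trans ((Equiv.sigmaCongrRight e).trans
        (Equiv.sigmaFiberEquiv X')), by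
      funext i
      exact (e (X i) ⟨i, rfl⟩).2⟩
  left_inv := by
    rintro ⟨σ, h⟩
    apply Subtype.ext
    ext i
    rfl
  right_inv := by
    intro e
    funext j
    ext ⟨i, hi⟩
    subst hi
    rfl

lemma card_coset (X X' : Fin n → Fin m) :
    Fintype.card {σ : Equiv.Perm (Fin n) // X' ∘ σ = X} =
      if occVec X = occVec X' then ∏ j, (occVec X' j).factorial else 0 := by
  split_ifs with h
  · rw [Fintype.card_congr (fiberEquiv X X'), Fintype.card_pi]
    refine Finset.prod_congr rfl fun j _ => ?_
    have h1 : Fintype.card {i // X i = j} = occVec X' j := by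
      rw [Fintype.card_subtype]; exact congrFun h j
    have h2 : Fintype.card {i // X' i = j} = occVec X' j := Fintype.card_subtype _
    rw [Fintype.card_equiv (Fintype.equivOfCardEq (h1.trans h2.symm)), h1]
  · rw [Fintype.card_eq_zero_iff]
    exact ⟨fun ⟨σ, hσ⟩ => h (hσ ▸ occVec_comp_perm X' σ)⟩

lemma sum_perm_eq (X' : Fin n → Fin m) (g : (Fin n → Fin m) → ℂ) :
    ∑ σ : Equiv.Perm (Fin n), g (X' ∘ σ) =
      (∏ j, ((occVec X' j).factorial : ℂ)) *
        ∑ X, if occVec X = occVec X' then g X else 0 := by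
  rw [← Finset.sum_fiberwise' Finset.univ (fun σ : Equiv.Perm (Fin n) => X' ∘ σ) g]
  rw [Finset.mul_sum]
  refine Finset.sum_congr rfl fun X _ => ?_
  rw [Finset.sum_const, nsmul_eq_mul]
  have hc : (Finset.univ.filter fun σ : Equiv.Perm (Fin n) => X' ∘ σ = X).card =
      Fintype.card {σ : Equiv.Perm (Fin n) // X' ∘ σ = X} := (Fintype.card_subtype _).symm
  rw [hc, card_coset]
  split_ifs with h
  · push_cast; ring
  · simp

end BosonAux

open BosonAux

/-- Functorial model equals permanent model:
`⟨J| α U^{⊗n} α† |I⟩ = Perm(U_{I,J}) / √(N_I · N_J)`, where `U^{⊗n}` has matrix elements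
`⟨Y| U^{⊗n} |X⟩ = ∏_i U (Y i) (X i)`, `N_S = ∏_j S_j!`, and `U_{I,J}` is built from
representatives `Xrep ∈ a⁻¹(I)`, `Yrep ∈ a⁻¹(J)` by `(U_{I,J})_{pq} = U (Yrep p) (Xrep q)`. -/
theorem functorial_eq_permanent_model {n m : ℕ} (U : Matrix (Fin m) (Fin m) ℂ)
    (I J : Fin m → ℕ) (hI : ∑ j, I j = n) (hJ : ∑ j, J j = n)
    (Xrep Yrep : Fin n → Fin m) (hX : occVec Xrep = I) (hY : occVec Yrep = J) :
    ∑ Y : Fin n → Fin m, ∑ X : Fin n → Fin m,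
        (adag J Y : ℂ) * (adag I X : ℂ) * ∏ i, U (Y i) (X i) =
      perm (Matrix.of fun p q => U (Yrep p) (Xrep q)) /
        Real.sqrt ((∏ j, (I j).factorial : ℝ) * (∏ j, (J j).factorial : ℝ)) := by
  classical
  set P : ℂ := perm (Matrix.of fun p q => U (Yrep p) (Xrep q)) with hP
  set a : ℝ := ∏ j, ((I j).factorial : ℝ) with ha
  set b : ℝ := ∏ j, ((J j).factorial : ℝ) with hb
  have ha0 : 0 < a := Finset.prod_pos fun j _ => by positivity
  have hb0 : 0 < b := Finset.prod_pos fun j _ => by positivity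
  have hk0 : (0:ℝ) < (n.factorial : ℝ) := by positivity
  set cI : ℝ := Real.sqrt (a / n.factorial) with hcI
  set cJ : ℝ := Real.sqrt (b / n.factorial) with hcJ
  set S : ℂ := ∑ Y : Fin n → Fin m, if occVec Y = J then
      (∑ X : Fin n → Fin m, if occVec X = I then ∏ i, U (Y i) (X i) else 0) else 0 with hSdef
  -- Step 1: LHS = cJ * cI * S
  have hL : (∑ Y : Fin n → Fin m, ∑ X : Fin n → Fin m,
      (adag J Y : ℂ) * (adag I X : ℂ) * ∏ i, U (Y i) (X i)) = (cJ:ℂ) * (cI:ℂ) * S := by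
    have key : ∀ Y X : Fin n → Fin m, (adag J Y : ℂ) * (adag I X : ℂ) * ∏ i, U (Y i) (X i)
        = (cJ:ℂ) * (cI:ℂ) * (if occVec Y = J then
            (if occVec X = I then ∏ i, U (Y i) (X i) else 0) else 0) := by
      intro Y X
      unfold adag
      split_ifs <;> push_cast <;> ring
    simp only [key, ← Finset.mul_sum]
    congr 1
    refine Finset.sum_congr rfl fun Y _ => ?_
    split_ifs with h
    · rfl
    · simp
  -- Step 2: a * b * S = n! * P
  have hτ : ∀ τ : Equiv.Perm (Fin n),
      (∑ σ : Equiv.Perm (Fin n), ∏ i, U (Yrep (τ i)) (Xrep (σ i))) = P := by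
    intro τ
    have h1 : ∀ σ : Equiv.Perm (Fin n),
        (∏ i, U (Yrep (τ i)) (Xrep (σ i))) =
          ∏ i, U (Yrep i) (Xrep ((σ * τ⁻¹) i)) := by
      intro σ
      rw [← Equiv.prod_comp τ (fun i => U (Yrep i) (Xrep ((σ * τ⁻¹) i)))]
      simp [Equiv.Perm.mul_apply]
    simp only [h1]
    rw [(Group.mulRight_bijective τ⁻¹).sum_comp
      (fun π : Equiv.Perm (Fin n) => ∏ i, U (Yrep i) (Xrep (π i)))]
    rfl
  have hS : (a:ℂ) * (b:ℂ) * S = (n.factorial : ℂ) * P := by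
    have hbC : (∏ j, ((occVec Yrep j).factorial : ℂ)) = (b:ℂ) := by
      rw [hY, hb]; push_cast; rfl
    have haC : (∏ j, ((occVec Xrep j).factorial : ℂ)) = (a:ℂ) := by
      rw [hX, ha]; push_cast; rfl
    have houter := sum_perm_eq Yrep (fun Y =>
      ∑ X : Fin n → Fin m, if occVec X = I then ∏ i, U (Y i) (X i) else 0)
    rw [hbC, hY] at houter
    have hinner : ∀ τ : Equiv.Perm (Fin n),
        (a:ℂ) * (∑ X : Fin n → Fin m, if occVec X = I then
            ∏ i, U ((Yrep ∘ τ) i) (X i) else 0) =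
          ∑ σ : Equiv.Perm (Fin n), ∏ i, U (Yrep (τ i)) (Xrep (σ i)) := by
      intro τ
      have := sum_perm_eq Xrep (fun X => ∏ i, U ((Yrep ∘ τ) i) (X i))
      rw [haC, hX] at this
      rw [← this]
      rfl
    calc (a:ℂ) * (b:ℂ) * S = (a:ℂ) * ((b:ℂ) * S) := by ring
      _ = (a:ℂ) * ∑ τ : Equiv.Perm (Fin n), (fun Y =>
            ∑ X : Fin n → Fin m, if occVec X = I then ∏ i, U (Y i) (X i) else 0) (Yrep ∘ τ) := by
          rw [houter]
      _ = ∑ τ : Equiv.Perm (Fin n), (a:ℂ) * (∑ X : Fin n → Fin m, if occVec X = I then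
            ∏ i, U ((Yrep ∘ τ) i) (X i) else 0) := by rw [Finset.mul_sum]
      _ = ∑ τ : Equiv.Perm (Fin n), ∑ σ : Equiv.Perm (Fin n),
            ∏ i, U (Yrep (τ i)) (Xrep (σ i)) := by
          exact Finset.sum_congr rfl fun τ _ => hinner τ
      _ = ∑ τ : Equiv.Perm (Fin n), P := Finset.sum_congr rfl fun τ _ => hτ τ
      _ = (n.factorial : ℂ) * P := by
          rw [Finset.sum_const, nsmul_eq_mul, Finset.card_univ, Fintype.card_perm,
            Fintype.card_fin]
  -- Step 3: arithmetic
  rw [hL]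
  have hab0 : (0:ℝ) < a * b := by positivity
  have hs0 : (0:ℝ) < Real.sqrt (a * b) := Real.sqrt_pos.mpr hab0
  have hsq : Real.sqrt (a * b) * Real.sqrt (a * b) = a * b := Real.mul_self_sqrt hab0.le
  have hcc : cJ * cI = Real.sqrt (a * b) / n.factorial := by
    rw [hcJ, hcI, ← Real.sqrt_mul (by positivity),
      show b / n.factorial * (a / n.factorial) = a * b / (n.factorial : ℝ)^2 by ring,
      Real.sqrt_div hab0.le, Real.sqrt_sq hk0.le]
  have haC : (a:ℂ) ≠ 0 := by exact_mod_cast ha0.ne'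
  have hbC : (b:ℂ) ≠ 0 := by exact_mod_cast hb0.ne'
  have hkC : ((n.factorial : ℝ):ℂ) ≠ 0 := by exact_mod_cast hk0.ne'
  have hsC : ((Real.sqrt (a * b) : ℝ):ℂ) ≠ 0 := by exact_mod_cast hs0.ne'
  have hsqC : ((Real.sqrt (a * b) : ℝ):ℂ) * ((Real.sqrt (a * b) : ℝ):ℂ) = (a:ℂ) * (b:ℂ) := by
    exact_mod_cast congrArg (Complex.ofReal) hsq
  have hSval : S = (n.factorial : ℂ) * P / ((a:ℂ) * (b:ℂ)) := by
    rw [eq_div_iff (mul_ne_zero haC hbC)]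
    linear_combination hS
  have hccC : (cJ:ℂ) * (cI:ℂ) = ((Real.sqrt (a * b) : ℝ):ℂ) / ((n.factorial : ℝ):ℂ) := by
    rw [show (cJ:ℂ) * (cI:ℂ) = ((cJ * cI : ℝ):ℂ) by push_cast; ring, hcc]
    push_cast
    ring
  rw [hSval, hccC]
  have hk' : ((n.factorial : ℕ):ℂ) = ((n.factorial : ℝ):ℂ) := by push_cast; rfl
  rw [hk']
  rw [div_mul_div_comm, div_eq_div_iff (mul_ne_zero hkC (mul_ne_zero haC hbC)) hsC]
  linear_combination (((n.factorial : ℝ):ℂ) * P) * hsqC
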